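/- arXiv:1902.08876 — 5 statements merged into one kernel-verified Lean document; each statement's English description precedes it below -/
import Mathlib

section
/- For every integer m ≥ 2, the quantity γ_m = 4·16^{−m}·∑_{b=0}^{m−1} binom(2m−2, 2b)·C_{m−1−b}·C_b satisfies γ_m ≤ 1/(4(m−1)²). -/
open Finset

-- key upper bound on central binomial: CB(n)^2 * (3n+1) ≤ 16^n
lemma cb_sq (n : ℕ) : Nat.centralBinom n ^ 2 * (3 * n + 1) ≤ 16 ^ n := by
  induction n with
  | zero => simp [Nat.centralBinom]
  | succ n ih =>
    have h := Nat.succ_mul_centralBinom_succ n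
    have hD : ((n+1) * Nat.centralBinom (n+1))^2 = 4*(2*n+1)^2 * Nat.centralBinom n ^2 := by
      rw [h]; ring
    have hpos : 0 < (n+1)^2*(3*n+1) := by positivity
    refine Nat.le_of_mul_le_mul_left ?_ hpos
    calc (n+1)^2*(3*n+1) * (Nat.centralBinom (n+1)^2*(3*(n+1)+1))
        = (3*(n+1)+1)*(3*n+1)*(((n+1)*Nat.centralBinom (n+1))^2) := by ring
      _ = 4*(2*n+1)^2*(3*n+4) * (Nat.centralBinom n^2*(3*n+1)) := by rw [hD]; ring
      _ ≤ 4*(2*n+1)^2*(3*n+4) * 16^n := Nat.mul_le_mul_left _ ih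
      _ ≤ (16*((n+1)^2*(3*n+1))) * 16^n := Nat.mul_le_mul_right _ (by nlinarith)
      _ = (n+1)^2*(3*n+1) * 16^(n+1) := by ring

-- pointwise identity: C(2n,2b)·CB(n−b)·CB(b) = C(2n,n)·C(n,b)²
lemma pw (n b : ℕ) (hb : b ≤ n) :
    Nat.choose (2*n) (2*b) * Nat.centralBinom (n-b) * Nat.centralBinom b
      = Nat.choose (2*n) n * Nat.choose n b ^ 2 := by
  have key : (Nat.choose (2*n) (2*b) * Nat.centralBinom (n-b) * Nat.centralBinom b : ℚ)
      = Nat.choose (2*n) n * Nat.choose n b ^ 2 := by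
    simp only [Nat.centralBinom]
    rw [Nat.cast_choose ℚ (by omega : 2*b ≤ 2*n),
        Nat.cast_choose ℚ (by omega : n-b ≤ 2*(n-b)),
        Nat.cast_choose ℚ (by omega : b ≤ 2*b),
        Nat.cast_choose ℚ (by omega : n ≤ 2*n),
        Nat.cast_choose ℚ hb,
        (by omega : 2*n - 2*b = 2*(n-b)),
        (by omega : 2*(n-b) - (n-b) = n-b),
        (by omega : 2*b - b = b),
        (by omega : 2*n - n = n)]
    have f1 : ((2*b).factorial : ℚ) ≠ 0 := by exact_mod_cast (Nat.factorial_pos _).ne'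
    have f2 : ((2*(n-b)).factorial : ℚ) ≠ 0 := by exact_mod_cast (Nat.factorial_pos _).ne'
    have f3 : ((n-b).factorial : ℚ) ≠ 0 := by exact_mod_cast (Nat.factorial_pos _).ne'
    have f4 : (b.factorial : ℚ) ≠ 0 := by exact_mod_cast (Nat.factorial_pos _).ne'
    have f5 : (n.factorial : ℚ) ≠ 0 := by exact_mod_cast (Nat.factorial_pos _).ne'
    field_simp
  exact_mod_cast key

lemma pw2 (n b : ℕ) (hb : b ≤ n) :
    (n+1)^2 * (Nat.choose (2*n) (2*b) * catalan (n-b) * catalan b)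
      = Nat.choose (2*n) n * (Nat.choose (n+1) (b+1) * Nat.choose (n+1) b) := by
  refine Nat.eq_of_mul_eq_mul_left (show 0 < (b+1)*(n-b+1) by positivity) ?_
  have hc1 : (n-b+1) * catalan (n-b) = Nat.centralBinom (n-b) := by
    exact succ_mul_catalan_eq_centralBinom (n-b)
  have hc2 : (b+1) * catalan b = Nat.centralBinom b := by
    exact succ_mul_catalan_eq_centralBinom b
  have hA : (n+1) * Nat.choose n b = Nat.choose (n+1) (b+1) * (b+1) :=
    Nat.add_one_mul_choose_eq n b
  have hB : Nat.choose n b * (n+1) = Nat.choose (n+1) b * (n-b+1) := by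
    have := Nat.choose_mul_succ_eq n b
    rwa [(by omega : n + 1 - b = n - b + 1)] at this
  calc (b+1)*(n-b+1) * ((n+1)^2 * (Nat.choose (2*n) (2*b) * catalan (n-b) * catalan b))
      = (n+1)^2 * (Nat.choose (2*n) (2*b) * ((n-b+1) * catalan (n-b)) * ((b+1) * catalan b)) := by
        ring
    _ = (n+1)^2 * (Nat.choose (2*n) (2*b) * Nat.centralBinom (n-b) * Nat.centralBinom b) := by
        rw [hc1, hc2]
    _ = (n+1)^2 * (Nat.choose (2*n) n * Nat.choose n b ^ 2) := by rw [pw n b hb]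
    _ = Nat.choose (2*n) n * (((n+1) * Nat.choose n b) * (Nat.choose n b * (n+1))) := by ring
    _ = Nat.choose (2*n) n * ((Nat.choose (n+1) (b+1) * (b+1)) * (Nat.choose (n+1) b * (n-b+1))) := by
        rw [hA, hB]
    _ = (b+1)*(n-b+1) * (Nat.choose (2*n) n * (Nat.choose (n+1) (b+1) * Nat.choose (n+1) b)) := by
        ring

lemma V_le (n : ℕ) :
    ∑ b ∈ range (n+1), Nat.choose (n+1) (b+1) * Nat.choose (n+1) b ≤ Nat.centralBinom (n+1) := by
  set g : ℕ → ℕ := fun i => Nat.choose (n+1) i * Nat.choose (n+1) (n+2-i) with hg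
  have hsum : ∑ b ∈ range (n+1), Nat.choose (n+1) (b+1) * Nat.choose (n+1) b
      = ∑ b ∈ range (n+1), g (b+1) := by
    refine Finset.sum_congr rfl fun b hb => ?_
    simp only [hg]
    have hb' : b ≤ n := by simpa using Nat.lt_succ_iff.mp (mem_range.mp hb)
    rw [(by omega : n+2-(b+1) = n+1-b), Nat.choose_symm (by omega)]
  have hvdm : Nat.choose (2*n+2) (n+2) = ∑ i ∈ range (n+3), g i := by
    have h := Nat.add_choose_eq (n+1) (n+1) (n+2)
    rw [(by omega : n+1+(n+1) = 2*n+2)] at h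
    rw [h, Finset.Nat.sum_antidiagonal_eq_sum_range_succ (fun i j => Nat.choose (n+1) i * Nat.choose (n+1) j)]
  have hfull : ∑ i ∈ range (n+3), g i = (∑ b ∈ range (n+1), g (b+1)) + g 0 + g (n+2) := by
    rw [Finset.sum_range_succ, Finset.sum_range_succ' g (n+1)]
  have h0 : g 0 = 0 := by simp [hg, Nat.choose_eq_zero_of_lt (by omega : n+1 < n+2)]
  have h2 : g (n+2) = 0 := by simp [hg, Nat.choose_eq_zero_of_lt (by omega : n+1 < n+2)]
  calc ∑ b ∈ range (n+1), Nat.choose (n+1) (b+1) * Nat.choose (n+1) b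
      = Nat.choose (2*n+2) (n+2) := by rw [hsum, hvdm, hfull, h0, h2]; omega
    _ = Nat.choose (2*(n+1)) (n+2) := by rw [(by omega : 2*n+2 = 2*(n+1))]
    _ ≤ Nat.centralBinom (n+1) := Nat.choose_le_centralBinom _ _

/-- The `m`-th term `γ_m = 4·16^{−m}·∑_{b=0}^{m−1} C(2m−2, 2b)·C_{m−1−b}·C_b`
of the series defining the isolated-vertex constant `γ`. -/
noncomputable def gammaTerm (m : ℕ) : ℝ :=
  4 * ((16 : ℝ) ^ m)⁻¹ *
    ∑ b ∈ Finset.range m,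
      (Nat.choose (2 * m - 2) (2 * b) : ℝ) * (catalan (m - 1 - b) : ℝ) * (catalan b : ℝ)
/-- for every `m ≥ 2`, `γ_m ≤ 1/(4(m−1)²)`. -/
theorem gammaTerm_le (m : ℕ) (hm : 2 ≤ m) :
    gammaTerm m ≤ 1 / (4 * ((m : ℝ) - 1) ^ 2) := by
  obtain ⟨k, rfl⟩ : ∃ k, m = k + 2 := ⟨m - 2, by omega⟩
  set n := k + 1 with hn
  set N := ∑ b ∈ range (n+1), Nat.choose (2*n) (2*b) * catalan (n-b) * catalan b with hN
  -- the central Nat inequality : n^2 * N ≤ 16^n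
  have hsum : (n+1)^2 * N
      = Nat.choose (2*n) n * ∑ b ∈ range (n+1), Nat.choose (n+1) (b+1) * Nat.choose (n+1) b := by
    rw [hN, Finset.mul_sum, Finset.mul_sum]
    exact Finset.sum_congr rfl fun b hb => pw2 n b (Nat.lt_succ_iff.mp (mem_range.mp hb))
  have hBV : (n+1)^2 * N ≤ Nat.centralBinom n * Nat.centralBinom (n+1) := by
    rw [hsum]; exact Nat.mul_le_mul_left _ (V_le n)
  have h1 := cb_sq n
  have h2 := cb_sq (n+1)
  have step1 : ((n+1)^2*N)^2 * ((3*n+1)*(3*(n+1)+1)) ≤ 16^n * 16^(n+1) :=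
    calc ((n+1)^2*N)^2 * ((3*n+1)*(3*(n+1)+1))
        ≤ (Nat.centralBinom n * Nat.centralBinom (n+1))^2 * ((3*n+1)*(3*(n+1)+1)) :=
          Nat.mul_le_mul_right _ (Nat.pow_le_pow_left hBV 2)
      _ = (Nat.centralBinom n^2*(3*n+1)) * (Nat.centralBinom (n+1)^2*(3*(n+1)+1)) := by ring
      _ ≤ 16^n * 16^(n+1) := Nat.mul_le_mul h1 h2
  have hX : 16 * n^4 ≤ (n+1)^4 * ((3*n+1)*(3*(n+1)+1)) := by
    have h1n : 1 ≤ n := Nat.le_add_left 1 k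
    have ha : 16 ≤ (3*n+1)*(3*(n+1)+1) := by nlinarith
    calc 16*n^4 ≤ ((3*n+1)*(3*(n+1)+1)) * n^4 := Nat.mul_le_mul_right _ ha
      _ ≤ ((3*n+1)*(3*(n+1)+1)) * (n+1)^4 :=
          Nat.mul_le_mul_left _ (Nat.pow_le_pow_left (by omega) 4)
      _ = (n+1)^4 * ((3*n+1)*(3*(n+1)+1)) := by ring
  have hNn : n^2 * N ≤ 16^n := by
    have hsq : (n^2*N)^2 * 16 ≤ (16^n)^2 * 16 :=
      calc (n^2*N)^2 * 16 = (16*n^4) * N^2 := by ring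
        _ ≤ ((n+1)^4 * ((3*n+1)*(3*(n+1)+1))) * N^2 := Nat.mul_le_mul_right _ hX
        _ = ((n+1)^2*N)^2 * ((3*n+1)*(3*(n+1)+1)) := by ring
        _ ≤ 16^n * 16^(n+1) := step1
        _ = (16^n)^2 * 16 := by ring
    have := Nat.le_of_mul_le_mul_right hsq (by norm_num)
    exact Nat.pow_le_pow_iff_left (by norm_num) |>.mp this
  -- pass to ℝ
  unfold gammaTerm
  have hidx1 : 2*(k+2)-2 = 2*n := by omega
  have hidx2 : ∀ b : ℕ, k+2-1-b = n-b := fun b => by omega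
  simp only [hidx1, hidx2]
  have hS : ∑ b ∈ range (k+2), (Nat.choose (2*n) (2*b) : ℝ) * (catalan (n-b) : ℝ) * (catalan b : ℝ)
      = (N:ℝ) := by rw [hN]; push_cast; rfl
  rw [hS]
  have hNc : (n:ℝ)^2 * (N:ℝ) ≤ 16^n := by exact_mod_cast hNn
  have hmc : ((k+2:ℕ):ℝ) - 1 = (n:ℝ) := by push_cast [hn]; ring
  rw [hmc]
  have hn0 : (0:ℝ) < (n:ℝ) := by exact_mod_cast Nat.succ_pos k
  have heq : 4 * ((16:ℝ)^(k+2))⁻¹ * (N:ℝ) = 4*(N:ℝ) / 16^(n+1) := by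
    rw [show k+2 = n+1 from rfl]; ring
  rw [heq, div_le_div_iff₀ (by positivity) (by positivity)]
  have h16 : (16:ℝ)^(n+1) = 16 * 16^n := by ring
  nlinarith [hNc]
end

section
/- For any ε > 0 and any fixed c ∈ (0,1), d > 0, for all sufficiently large n: ∑ k^{−3/2}·ℓ^{−3/2}·min(k,ℓ) over integer pairs (k,ℓ) with d·log n ≤ k,ℓ ≤ cn, lies between (1−ε)·4·log n and (1+ε)·4·log n. -/
open Real Finset

private lemma tel_upper (f F : ℕ → ℝ) {a b : ℕ} (hab : a ≤ b)
    (h : ∀ i, a ≤ i → i < b → f i ≤ F (i+1) - F i) :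
    ∑ i ∈ Finset.Ico a b, f i ≤ F b - F a := by
  calc ∑ i ∈ Finset.Ico a b, f i ≤ ∑ i ∈ Finset.Ico a b, (F (i+1) - F i) := by
        apply Finset.sum_le_sum
        intro i hi
        rw [Finset.mem_Ico] at hi
        exact h i hi.1 hi.2
    _ = F b - F a := by
        rw [Finset.sum_Ico_eq_sub _ hab, Finset.sum_range_sub, Finset.sum_range_sub]
        ring

private lemma tel_lower (f F : ℕ → ℝ) {a b : ℕ} (hab : a ≤ b)
    (h : ∀ i, a ≤ i → i < b → F (i+1) - F i ≤ f i) :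
    F b - F a ≤ ∑ i ∈ Finset.Ico a b, f i := by
  calc F b - F a = ∑ i ∈ Finset.Ico a b, (F (i+1) - F i) := by
        rw [Finset.sum_Ico_eq_sub _ hab, Finset.sum_range_sub, Finset.sum_range_sub]; ring
    _ ≤ ∑ i ∈ Finset.Ico a b, f i := by
        apply Finset.sum_le_sum
        intro i hi
        rw [Finset.mem_Ico] at hi
        exact h i hi.1 hi.2

private lemma P1 {x : ℝ} (hx : 1 ≤ x) : 1/Real.sqrt x ≤ 2*Real.sqrt x - 2*Real.sqrt (x-1) := by
  have hu0 : 0 < Real.sqrt x := Real.sqrt_pos.2 (by linarith)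
  have hu : Real.sqrt x ^ 2 = x := Real.sq_sqrt (by linarith)
  have hv : Real.sqrt (x-1) ^ 2 = x - 1 := Real.sq_sqrt (by linarith)
  have hv0 : 0 ≤ Real.sqrt (x-1) := Real.sqrt_nonneg _
  rw [div_le_iff₀ hu0]
  nlinarith [sq_nonneg (Real.sqrt x - Real.sqrt (x-1))]

private lemma P2 {x : ℝ} (hx : 1 ≤ x) : 2*Real.sqrt (x+1) - 2*Real.sqrt x ≤ 1/Real.sqrt x := by
  have hu0 : 0 < Real.sqrt x := Real.sqrt_pos.2 (by linarith)
  have hu : Real.sqrt x ^ 2 = x := Real.sq_sqrt (by linarith)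
  have hw : Real.sqrt (x+1) ^ 2 = x + 1 := Real.sq_sqrt (by linarith)
  have hw0 : 0 ≤ Real.sqrt (x+1) := Real.sqrt_nonneg _
  rw [le_div_iff₀ hu0]
  nlinarith [sq_nonneg (Real.sqrt (x+1) - Real.sqrt x)]

private lemma P3 {x : ℝ} (hx : 2 ≤ x) :
    1/(x * Real.sqrt x) ≤ 2/Real.sqrt (x-1) - 2/Real.sqrt x := by
  have hu0 : 0 < Real.sqrt x := Real.sqrt_pos.2 (by linarith)
  have hv0 : 0 < Real.sqrt (x-1) := Real.sqrt_pos.2 (by linarith)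
  have hu : Real.sqrt x ^ 2 = x := Real.sq_sqrt (by linarith)
  have hv : Real.sqrt (x-1) ^ 2 = x - 1 := Real.sq_sqrt (by linarith)
  have hv1 : 1 ≤ Real.sqrt (x-1) :=
    (Real.le_sqrt (by norm_num) (by linarith)).2 (by nlinarith)
  have huv : Real.sqrt (x-1) ≤ Real.sqrt x := Real.sqrt_le_sqrt (by linarith)
  rw [div_sub_div _ _ hv0.ne' hu0.ne', div_le_div_iff₀ (by positivity) (by positivity)]
  nlinarith [mul_nonneg (sub_nonneg.2 huv) (mul_pos hu0 hv0).le,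
    mul_nonneg (sub_nonneg.2 huv) hu0.le, sq_nonneg (Real.sqrt x - Real.sqrt (x-1)),
    mul_pos hu0 hv0]

private lemma P4 {x : ℝ} (hx : 1 ≤ x) :
    2/Real.sqrt x - 2/Real.sqrt (x+1) ≤ 1/(x * Real.sqrt x) := by
  have hu0 : 0 < Real.sqrt x := Real.sqrt_pos.2 (by linarith)
  have hw0 : 0 < Real.sqrt (x+1) := Real.sqrt_pos.2 (by linarith)
  have hu : Real.sqrt x ^ 2 = x := Real.sq_sqrt (by linarith)
  have hw : Real.sqrt (x+1) ^ 2 = x + 1 := Real.sq_sqrt (by linarith)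
  have huw : Real.sqrt x ≤ Real.sqrt (x+1) := Real.sqrt_le_sqrt (by linarith)
  rw [div_sub_div _ _ hu0.ne' hw0.ne', div_le_div_iff₀ (by positivity) (by positivity)]
  nlinarith [mul_nonneg (sub_nonneg.2 huw) (mul_pos hu0 hw0).le,
    mul_nonneg (sub_nonneg.2 huw) hu0.le, mul_pos hu0 hw0]

private lemma P5 {x : ℝ} (hx : 0 < x) : Real.log (x+1) - Real.log x ≤ 1/x := by
  have h := Real.log_le_sub_one_of_pos (show 0 < (x+1)/x by positivity)
  rw [Real.log_div (by linarith) hx.ne'] at h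
  have : (x+1)/x - 1 = 1/x := by field_simp; ring
  linarith [this ▸ h]

private lemma P6 {x : ℝ} (hx : 0 < x) : 1/(x+1) ≤ Real.log (x+1) - Real.log x := by
  have h := Real.log_le_sub_one_of_pos (show 0 < x/(x+1) by positivity)
  rw [Real.log_div hx.ne' (by linarith)] at h
  have : x/(x+1) - 1 = -(1/(x+1)) := by field_simp; ring
  linarith [this ▸ h]

private lemma sum_invsqrt_le {a k : ℕ} (ha : 1 ≤ a) (hak : a ≤ k) :
    ∑ ℓ ∈ Finset.Ico a k, 1/Real.sqrt ℓ ≤ 2*Real.sqrt ((k:ℝ)-1) := by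
  have h := tel_upper (fun ℓ => 1/Real.sqrt ℓ) (fun i => 2*Real.sqrt ((i:ℝ)-1)) hak ?_
  · have : 0 ≤ Real.sqrt ((a:ℝ)-1) := Real.sqrt_nonneg _
    linarith
  · intro i hi _
    have hi1 : (1:ℝ) ≤ (i:ℝ) := by exact_mod_cast le_trans ha hi
    have := P1 hi1
    push_cast
    simp only [add_sub_cancel_right]
    linarith

private lemma sum_invsqrt_ge {a k : ℕ} (ha : 1 ≤ a) (hak : a ≤ k) :
    2*Real.sqrt (k:ℝ) - 2*Real.sqrt (a:ℝ) ≤ ∑ ℓ ∈ Finset.Ico a k, 1/Real.sqrt ℓ := by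
  have h := tel_lower (fun ℓ => 1/Real.sqrt ℓ) (fun i => 2*Real.sqrt (i:ℝ)) hak ?_
  · linarith
  · intro i hi _
    have hi1 : (1:ℝ) ≤ (i:ℝ) := by exact_mod_cast le_trans ha hi
    have := P2 hi1
    push_cast
    linarith

private lemma sum_pow32_le {k m : ℕ} (hk : 2 ≤ k) (hkm : k ≤ m) :
    ∑ ℓ ∈ Finset.Ico k m, 1/((ℓ:ℝ)*Real.sqrt ℓ) ≤ 2/Real.sqrt ((k:ℝ)-1) := by
  have h := tel_upper (fun ℓ => 1/((ℓ:ℝ)*Real.sqrt ℓ)) (fun i => -(2/Real.sqrt ((i:ℝ)-1))) hkm ?_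
  · have : 0 ≤ 2/Real.sqrt ((m:ℝ)-1) := by positivity
    linarith
  · intro i hi _
    have hi2 : (2:ℝ) ≤ (i:ℝ) := by exact_mod_cast le_trans hk hi
    have := P3 hi2
    push_cast
    simp only [add_sub_cancel_right]
    linarith

private lemma sum_pow32_ge {k m : ℕ} (hk : 1 ≤ k) (hkm : k ≤ m) :
    2/Real.sqrt (k:ℝ) - 2/Real.sqrt (m:ℝ) ≤ ∑ ℓ ∈ Finset.Ico k m, 1/((ℓ:ℝ)*Real.sqrt ℓ) := by
  have h := tel_lower (fun ℓ => 1/((ℓ:ℝ)*Real.sqrt ℓ)) (fun i => -(2/Real.sqrt (i:ℝ))) hkm ?_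
  · linarith
  · intro i hi _
    have hi1 : (1:ℝ) ≤ (i:ℝ) := by exact_mod_cast le_trans hk hi
    have := P4 hi1
    push_cast
    linarith

private lemma sum_inv_ge {a m : ℕ} (ha : 1 ≤ a) (ham : a ≤ m) :
    Real.log m - Real.log a ≤ ∑ k ∈ Finset.Ico a m, 1/(k:ℝ) := by
  have h := tel_lower (fun k => 1/(k:ℝ)) (fun i => Real.log (i:ℝ)) ham ?_
  · linarith
  · intro i hi _
    have hi1 : (0:ℝ) < (i:ℝ) := by exact_mod_cast lt_of_lt_of_le ha hi
    have := P5 hi1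
    push_cast
    linarith

private lemma sum_invsub_le {a m : ℕ} (ha : 3 ≤ a) (ham : a ≤ m) :
    ∑ k ∈ Finset.Ico a m, 1/((k:ℝ)-1) ≤ Real.log ((m:ℝ)-2) - Real.log ((a:ℝ)-2) := by
  have h := tel_upper (fun k => 1/((k:ℝ)-1)) (fun i => Real.log ((i:ℝ)-2)) ham ?_
  · linarith
  · intro i hi _
    have hi3 : (3:ℝ) ≤ (i:ℝ) := by exact_mod_cast le_trans ha hi
    have := P6 (show (0:ℝ) < (i:ℝ)-2 by linarith)
    push_cast
    have e1 : (i:ℝ) - 2 + 1 = (i:ℝ) - 1 := by ring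
    rw [e1] at this
    have e2 : (i:ℝ) + 1 - 2 = (i:ℝ) - 1 := by ring
    rw [e2]
    linarith

private lemma rpow_eq {l : ℕ} (h : 1 ≤ l) :
    (l:ℝ) ^ (-(3:ℝ)/2) = 1/((l:ℝ)*Real.sqrt l) := by
  have h0 : (0:ℝ) < (l:ℝ) := by exact_mod_cast h
  rw [show (-(3:ℝ)/2) = -(1 + 1/2) by norm_num, Real.rpow_neg h0.le, Real.rpow_add h0,
    Real.rpow_one, ← Real.sqrt_eq_rpow, one_div]

private lemma inner_decomp {a b k : ℕ} (ha : 1 ≤ a) (hak : a ≤ k) (hkb : k ≤ b) :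
    ∑ l ∈ Finset.Icc a b, (k:ℝ)^(-(3:ℝ)/2) * (l:ℝ)^(-(3:ℝ)/2) * ((min k l : ℕ):ℝ)
      = (k:ℝ)^(-(3:ℝ)/2) * (∑ l ∈ Finset.Ico a k, 1/Real.sqrt l)
        + ((k:ℝ)^(-(3:ℝ)/2) * (k:ℝ)) * (∑ l ∈ Finset.Ico k (b+1), 1/((l:ℝ)*Real.sqrt l)) := by
  rw [← Finset.Ico_add_one_right_eq_Icc a b, ← Finset.sum_Ico_consecutive _ hak (show k ≤ b + 1 from Nat.le_succ_of_le hkb)]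
  congr 1
  · rw [Finset.mul_sum]
    apply Finset.sum_congr rfl
    intro l hl
    rw [Finset.mem_Ico] at hl
    have hl1 : 1 ≤ l := le_trans ha hl.1
    have h0 : ((l:ℝ)) ≠ 0 := by positivity
    have hs : Real.sqrt l ≠ 0 := by
      refine (Real.sqrt_ne_zero ?_).2 (by exact_mod_cast Nat.one_le_iff_ne_zero.1 hl1)
      positivity
    rw [min_eq_right (le_of_lt hl.2), rpow_eq hl1]
    field_simp
  · rw [Finset.mul_sum]
    apply Finset.sum_congr rfl
    intro l hl
    rw [Finset.mem_Ico] at hl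
    have hl1 : 1 ≤ l := le_trans (le_trans ha hak) hl.1
    rw [min_eq_left hl.1, rpow_eq hl1]
    ring

private lemma sqrt_nat_pos {k : ℕ} (h : 1 ≤ k) : 0 < Real.sqrt k :=
  Real.sqrt_pos.2 (by exact_mod_cast h)

private lemma core_upper {a b : ℕ} (ha : 3 ≤ a) (hab : a ≤ b) :
    (∑ k ∈ Finset.Icc a b, ∑ l ∈ Finset.Icc a b,
      (k:ℝ)^(-(3:ℝ)/2) * (l:ℝ)^(-(3:ℝ)/2) * ((min k l : ℕ):ℝ)) ≤ 4 * Real.log b := by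
  have step1 : (∑ k ∈ Finset.Icc a b, ∑ l ∈ Finset.Icc a b,
      (k:ℝ)^(-(3:ℝ)/2) * (l:ℝ)^(-(3:ℝ)/2) * ((min k l : ℕ):ℝ))
      ≤ ∑ k ∈ Finset.Icc a b, 4/((k:ℝ)-1) := by
    apply Finset.sum_le_sum
    intro k hk
    rw [Finset.mem_Icc] at hk
    have hk3 : 3 ≤ k := le_trans ha hk.1
    have hk3' : (3:ℝ) ≤ (k:ℝ) := by exact_mod_cast hk3
    have hsk : 0 < Real.sqrt k := sqrt_nat_pos (by omega)
    have hsk1 : 0 < Real.sqrt ((k:ℝ)-1) := Real.sqrt_pos.2 (by linarith)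
    have hsq : Real.sqrt ((k:ℝ)-1) ^ 2 = (k:ℝ)-1 := Real.sq_sqrt (by linarith)
    rw [inner_decomp (by omega) hk.1 hk.2, rpow_eq (by omega : 1 ≤ k)]
    have t1 : 1/((k:ℝ)*Real.sqrt k) * (∑ l ∈ Finset.Ico a k, 1/Real.sqrt l) ≤ 2/((k:ℝ)-1) := by
      have h1 := sum_invsqrt_le (show 1 ≤ a by omega) hk.1
      have h2 : Real.sqrt ((k:ℝ)-1) ≤ Real.sqrt k := Real.sqrt_le_sqrt (by linarith)
      calc 1/((k:ℝ)*Real.sqrt k) * (∑ l ∈ Finset.Ico a k, 1/Real.sqrt l)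
          ≤ 1/((k:ℝ)*Real.sqrt k) * (2*Real.sqrt k) := by
            apply mul_le_mul_of_nonneg_left (le_trans h1 (by linarith)) (by positivity)
        _ = 2/(k:ℝ) := by field_simp
        _ ≤ 2/((k:ℝ)-1) := by apply div_le_div_of_nonneg_left (by norm_num) (by linarith) (by linarith)
    have t2 : (1/((k:ℝ)*Real.sqrt k) * (k:ℝ)) * (∑ l ∈ Finset.Ico k (b+1), 1/((l:ℝ)*Real.sqrt l))
        ≤ 2/((k:ℝ)-1) := by
      have h1 := sum_pow32_le (show 2 ≤ k by omega) (Nat.le_succ_of_le hk.2)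
      have hkk : (1/((k:ℝ)*Real.sqrt k) * (k:ℝ)) = 1/Real.sqrt k := by field_simp
      rw [hkk]
      have h2 : Real.sqrt ((k:ℝ)-1) ≤ Real.sqrt k := Real.sqrt_le_sqrt (by linarith)
      calc 1/Real.sqrt k * (∑ l ∈ Finset.Ico k (b+1), 1/((l:ℝ)*Real.sqrt l))
          ≤ 1/Real.sqrt k * (2/Real.sqrt ((k:ℝ)-1)) := by
            apply mul_le_mul_of_nonneg_left h1 (by positivity)
        _ ≤ 1/Real.sqrt ((k:ℝ)-1) * (2/Real.sqrt ((k:ℝ)-1)) := by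
            apply mul_le_mul_of_nonneg_right _ (by positivity)
            apply div_le_div_of_nonneg_left (by norm_num) hsk1 h2
        _ = 2/((k:ℝ)-1) := by rw [div_mul_div_comm, one_mul, ← sq, hsq]
    exact le_trans (add_le_add t1 t2) (le_of_eq (by ring))
  have step2 : ∑ k ∈ Finset.Icc a b, 4/((k:ℝ)-1) = 4 * ∑ k ∈ Finset.Icc a b, 1/((k:ℝ)-1) := by
    rw [Finset.mul_sum]
    apply Finset.sum_congr rfl
    intro k _; ring
  have step3 : ∑ k ∈ Finset.Icc a b, 1/((k:ℝ)-1) ≤ Real.log b := by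
    rw [← Finset.Ico_add_one_right_eq_Icc a b]
    have h1 := sum_invsub_le ha (show a ≤ b + 1 from Nat.le_succ_of_le hab)
    have e : ((b+1:ℕ):ℝ) - 2 = (b:ℝ) - 1 := by push_cast; ring
    rw [e] at h1
    have hb3' : (3:ℝ) ≤ (b:ℝ) := by exact_mod_cast le_trans ha hab
    have ha3' : (3:ℝ) ≤ (a:ℝ) := by exact_mod_cast ha
    have h2 : Real.log ((b:ℝ)-1) ≤ Real.log b := Real.log_le_log (by linarith) (by linarith)
    have h3 : 0 ≤ Real.log ((a:ℝ)-2) := Real.log_nonneg (by linarith)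
    linarith
  calc _ ≤ ∑ k ∈ Finset.Icc a b, 4/((k:ℝ)-1) := step1
    _ = 4 * ∑ k ∈ Finset.Icc a b, 1/((k:ℝ)-1) := step2
    _ ≤ 4 * Real.log b := by linarith

private lemma core_lower {a b : ℕ} (ha : 2 ≤ a) (hab : a ≤ b) :
    4*(Real.log ((b:ℝ)+1) - Real.log a) - 10 ≤
      ∑ k ∈ Finset.Icc a b, ∑ l ∈ Finset.Icc a b,
        (k:ℝ)^(-(3:ℝ)/2) * (l:ℝ)^(-(3:ℝ)/2) * ((min k l : ℕ):ℝ) := by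
  have ha2' : (2:ℝ) ≤ (a:ℝ) := by exact_mod_cast ha
  have hb2' : (2:ℝ) ≤ (b:ℝ) := by exact_mod_cast le_trans ha hab
  have hsb : 0 < Real.sqrt b := sqrt_nat_pos (by omega)
  have hsa1 : 0 < Real.sqrt ((a:ℝ)-1) := Real.sqrt_pos.2 (by linarith)
  -- pointwise lower bound
  have step1 : ∀ k ∈ Finset.Icc a b,
      4/(k:ℝ) - 2*Real.sqrt a * (1/((k:ℝ)*Real.sqrt k)) - (2/Real.sqrt b) * (1/Real.sqrt k)
        ≤ ∑ l ∈ Finset.Icc a b, (k:ℝ)^(-(3:ℝ)/2) * (l:ℝ)^(-(3:ℝ)/2) * ((min k l : ℕ):ℝ) := by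
    intro k hk
    rw [Finset.mem_Icc] at hk
    have hk2 : 2 ≤ k := le_trans ha hk.1
    have hk2' : (2:ℝ) ≤ (k:ℝ) := by exact_mod_cast hk2
    have hsk : 0 < Real.sqrt k := sqrt_nat_pos (by omega)
    have hsksq : Real.sqrt (k:ℝ) ^ 2 = (k:ℝ) := Real.sq_sqrt (by linarith)
    have hkk : (1/((k:ℝ)*Real.sqrt k) * (k:ℝ)) = 1/Real.sqrt k := by field_simp
    rw [inner_decomp (by omega) hk.1 hk.2, rpow_eq (by omega : 1 ≤ k), hkk]
    have lo1 : 1/((k:ℝ)*Real.sqrt k) * (2*Real.sqrt (k:ℝ) - 2*Real.sqrt (a:ℝ))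
        ≤ 1/((k:ℝ)*Real.sqrt k) * (∑ l ∈ Finset.Ico a k, 1/Real.sqrt l) :=
      mul_le_mul_of_nonneg_left (sum_invsqrt_ge (by omega) hk.1) (by positivity)
    have e1 : 1/((k:ℝ)*Real.sqrt k) * (2*Real.sqrt (k:ℝ) - 2*Real.sqrt (a:ℝ))
        = 2/(k:ℝ) - 2*Real.sqrt a * (1/((k:ℝ)*Real.sqrt k)) := by
      field_simp
    have lo2 : (1/((k:ℝ)*Real.sqrt k) * (k:ℝ)) * (2/Real.sqrt (k:ℝ) - 2/Real.sqrt ((b+1:ℕ):ℝ))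
        ≤ (1/((k:ℝ)*Real.sqrt k) * (k:ℝ)) * (∑ l ∈ Finset.Ico k (b+1), 1/((l:ℝ)*Real.sqrt l)) := by
      apply mul_le_mul_of_nonneg_left (sum_pow32_ge (by omega) (Nat.le_succ_of_le hk.2))
      positivity
    rw [hkk] at lo2
    have hb1 : Real.sqrt (b:ℝ) ≤ Real.sqrt ((b+1:ℕ):ℝ) := by
      apply Real.sqrt_le_sqrt; push_cast; linarith
    have e2 : 1/Real.sqrt k * (2/Real.sqrt (k:ℝ)) = 2/(k:ℝ) := by
      rw [div_mul_div_comm, one_mul, ← sq, hsksq]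
    have lo2' : 2/(k:ℝ) - (2/Real.sqrt b) * (1/Real.sqrt k)
        ≤ (1/Real.sqrt k) * (2/Real.sqrt (k:ℝ) - 2/Real.sqrt ((b+1:ℕ):ℝ)) := by
      rw [mul_sub, e2]
      have : (1/Real.sqrt k) * (2/Real.sqrt ((b+1:ℕ):ℝ)) ≤ (2/Real.sqrt b) * (1/Real.sqrt k) := by
        rw [mul_comm]
        apply mul_le_mul_of_nonneg_right _ (by positivity)
        apply div_le_div_of_nonneg_left (by norm_num) hsb hb1
      linarith
    calc 4/(k:ℝ) - 2*Real.sqrt a * (1/((k:ℝ)*Real.sqrt k)) - (2/Real.sqrt b) * (1/Real.sqrt k)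
        = (2/(k:ℝ) - 2*Real.sqrt a * (1/((k:ℝ)*Real.sqrt k)))
          + (2/(k:ℝ) - (2/Real.sqrt b) * (1/Real.sqrt k)) := by ring
      _ ≤ _ := add_le_add (e1 ▸ lo1) (le_trans lo2' lo2)
  -- sum up
  have step2 : ∑ k ∈ Finset.Icc a b,
      (4/(k:ℝ) - 2*Real.sqrt a * (1/((k:ℝ)*Real.sqrt k)) - (2/Real.sqrt b) * (1/Real.sqrt k))
      ≤ ∑ k ∈ Finset.Icc a b, ∑ l ∈ Finset.Icc a b,
        (k:ℝ)^(-(3:ℝ)/2) * (l:ℝ)^(-(3:ℝ)/2) * ((min k l : ℕ):ℝ) :=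
    Finset.sum_le_sum step1
  have split : ∑ k ∈ Finset.Icc a b,
      (4/(k:ℝ) - 2*Real.sqrt a * (1/((k:ℝ)*Real.sqrt k)) - (2/Real.sqrt b) * (1/Real.sqrt k))
      = 4 * (∑ k ∈ Finset.Icc a b, 1/(k:ℝ))
        - 2*Real.sqrt a * (∑ k ∈ Finset.Icc a b, 1/((k:ℝ)*Real.sqrt k))
        - (2/Real.sqrt b) * (∑ k ∈ Finset.Icc a b, 1/Real.sqrt k) := by
    rw [Finset.sum_sub_distrib, Finset.sum_sub_distrib, Finset.mul_sum, Finset.mul_sum,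
      Finset.mul_sum]
    congr 1
    congr 1
    apply Finset.sum_congr rfl
    intro k _; ring
  have s1 : Real.log ((b:ℝ)+1) - Real.log a ≤ ∑ k ∈ Finset.Icc a b, 1/(k:ℝ) := by
    rw [← Finset.Ico_add_one_right_eq_Icc a b]
    have h := sum_inv_ge (show 1 ≤ a by omega) (Nat.le_succ_of_le hab)
    have e : Real.log ((b+1:ℕ):ℝ) = Real.log ((b:ℝ)+1) := by norm_cast
    rw [e] at h
    exact h
  have s2 : 2*Real.sqrt a * (∑ k ∈ Finset.Icc a b, 1/((k:ℝ)*Real.sqrt k)) ≤ 6 := by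
    have h := sum_pow32_le ha (Nat.le_succ_of_le hab)
    rw [← Finset.Ico_add_one_right_eq_Icc a b]
    have hsum_nonneg : 0 ≤ ∑ k ∈ Finset.Ico a (b+1), 1/((k:ℝ)*Real.sqrt k) := by
      apply Finset.sum_nonneg; intro k _; positivity
    have key : 2*Real.sqrt (a:ℝ) * (2/Real.sqrt ((a:ℝ)-1)) ≤ 6 := by
      have e : 2*Real.sqrt (a:ℝ) * (2/Real.sqrt ((a:ℝ)-1)) = (4*Real.sqrt (a:ℝ))/Real.sqrt ((a:ℝ)-1) := by
        ring
      rw [e, div_le_iff₀ hsa1]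
      have hsa : Real.sqrt (a:ℝ) ^ 2 = (a:ℝ) := Real.sq_sqrt (by linarith)
      have hsa1sq : Real.sqrt ((a:ℝ)-1) ^ 2 = (a:ℝ)-1 := Real.sq_sqrt (by linarith)
      nlinarith [Real.sqrt_nonneg (a:ℝ), Real.sqrt_nonneg ((a:ℝ)-1),
        mul_nonneg (Real.sqrt_nonneg (a:ℝ)) (Real.sqrt_nonneg ((a:ℝ)-1))]
    calc 2*Real.sqrt (a:ℝ) * (∑ k ∈ Finset.Ico a (b+1), 1/((k:ℝ)*Real.sqrt k))
        ≤ 2*Real.sqrt (a:ℝ) * (2/Real.sqrt ((a:ℝ)-1)) := by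
          apply mul_le_mul_of_nonneg_left h (by positivity)
      _ ≤ 6 := key
  have s3 : (2/Real.sqrt b) * (∑ k ∈ Finset.Icc a b, 1/Real.sqrt k) ≤ 4 := by
    rw [← Finset.Ico_add_one_right_eq_Icc a b]
    have h := sum_invsqrt_le (show 1 ≤ a by omega) (Nat.le_succ_of_le hab)
    have e : ((b+1:ℕ):ℝ) - 1 = (b:ℝ) := by push_cast; ring
    rw [e] at h
    calc (2/Real.sqrt b) * (∑ k ∈ Finset.Ico a (b+1), 1/Real.sqrt k)
        ≤ (2/Real.sqrt b) * (2*Real.sqrt (b:ℝ)) := by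
          apply mul_le_mul_of_nonneg_left h (by positivity)
      _ = 4 := by field_simp; ring
  calc 4*(Real.log ((b:ℝ)+1) - Real.log a) - 10
      ≤ 4 * (∑ k ∈ Finset.Icc a b, 1/(k:ℝ))
        - 2*Real.sqrt a * (∑ k ∈ Finset.Icc a b, 1/((k:ℝ)*Real.sqrt k))
        - (2/Real.sqrt b) * (∑ k ∈ Finset.Icc a b, 1/Real.sqrt k) := by linarith
    _ = _ := split.symm
    _ ≤ _ := step2

private lemma log_le_two_sqrt {x : ℝ} (hx : 0 < x) : Real.log x ≤ 2*Real.sqrt x := by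
  have hs : 0 < Real.sqrt x := Real.sqrt_pos.2 hx
  have h1 := Real.log_le_sub_one_of_pos hs
  have h2 : Real.log (Real.sqrt x) = Real.log x / 2 := Real.log_sqrt hx.le
  linarith

private lemma exists_log_ge (r : ℝ) : ∃ N : ℕ, 1 ≤ N ∧ ∀ n : ℕ, N ≤ n → r ≤ Real.log n := by
  refine ⟨⌈Real.exp r⌉₊ + 1, by omega, ?_⟩
  intro n hn
  have h1 : Real.exp r ≤ n := by
    calc Real.exp r ≤ (⌈Real.exp r⌉₊ : ℝ) := Nat.le_ceil _
      _ ≤ n := by exact_mod_cast Nat.le_of_succ_le hn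
  have hn0 : (0:ℝ) < n := lt_of_lt_of_le (Real.exp_pos r) h1
  exact (Real.le_log_iff_exp_le hn0).2 h1

set_option maxHeartbeats 1000000 in
/-- for any `ε > 0` and fixed constants `c ∈ (0,1)`, `d > 0`, for all
sufficiently large `n` the sum `∑ k^{−3/2}·ℓ^{−3/2}·min(k,ℓ)` over integer pairs `(k,ℓ)`
with `d·log n ≤ k, ℓ ≤ cn` lies between `(1−ε)·4·log n` and `(1+ε)·4·log n`. -/
theorem min_weighted_double_sum (ε c d : ℝ) (hε : 0 < ε) (hc0 : 0 < c) (hc1 : c < 1)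
    (hd : 0 < d) :
    ∃ N : ℕ, ∀ n : ℕ, N ≤ n →
      (1 - ε) * (4 * Real.log n) ≤
        (∑ k ∈ Finset.Icc (⌈d * Real.log n⌉₊) (⌊c * (n : ℝ)⌋₊),
          ∑ l ∈ Finset.Icc (⌈d * Real.log n⌉₊) (⌊c * (n : ℝ)⌋₊),
            (k : ℝ) ^ (-(3 : ℝ) / 2) * (l : ℝ) ^ (-(3 : ℝ) / 2) * (min k l : ℕ)) ∧
      (∑ k ∈ Finset.Icc (⌈d * Real.log n⌉₊) (⌊c * (n : ℝ)⌋₊),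
          ∑ l ∈ Finset.Icc (⌈d * Real.log n⌉₊) (⌊c * (n : ℝ)⌋₊),
            (k : ℝ) ^ (-(3 : ℝ) / 2) * (l : ℝ) ^ (-(3 : ℝ) / 2) * (min k l : ℕ)) ≤
        (1 + ε) * (4 * Real.log n) := by
  set R : ℝ := max (max (3/d) 1) (max (16*(d+1)/ε^2) ((10 - 4*Real.log c)/(2*ε))) with hR
  obtain ⟨N₁, hN₁pos, hN₁⟩ := exists_log_ge R
  set N₂ : ℕ := ⌈((2*d+2)/c)^2⌉₊ + 1 with hN₂
  refine ⟨max N₁ N₂, ?_⟩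
  intro n hn
  have hnN₁ : N₁ ≤ n := le_trans (le_max_left _ _) hn
  have hnN₂ : N₂ ≤ n := le_trans (le_max_right _ _) hn
  have hn1 : 1 ≤ n := le_trans hN₁pos hnN₁
  have hn1' : (1:ℝ) ≤ (n:ℝ) := by exact_mod_cast hn1
  have hn0' : (0:ℝ) < (n:ℝ) := by linarith
  have hlogR : R ≤ Real.log n := hN₁ n hnN₁
  have hlog1 : (1:ℝ) ≤ Real.log n :=
    le_trans (le_trans (le_max_right _ _) (le_max_left _ _)) hlogR
  have hlog0 : (0:ℝ) ≤ Real.log n := by linarith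
  set a : ℕ := ⌈d * Real.log n⌉₊ with ha_def
  set b : ℕ := ⌊c * (n:ℝ)⌋₊ with hb_def
  -- a ≥ 3
  have hdl3 : (3:ℝ) ≤ d * Real.log n := by
    have h1 : 3/d ≤ Real.log n :=
      le_trans (le_trans (le_max_left _ _) (le_max_left _ _)) hlogR
    calc (3:ℝ) = d * (3/d) := by field_simp
      _ ≤ d * Real.log n := by apply mul_le_mul_of_nonneg_left h1 hd.le
  have hdl0 : (0:ℝ) ≤ d * Real.log n := by linarith
  have ha3 : 3 ≤ a := by
    have : (3:ℝ) ≤ (a:ℝ) := le_trans hdl3 (Nat.le_ceil _)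
    exact_mod_cast this
  have ha3' : (3:ℝ) ≤ (a:ℝ) := by exact_mod_cast ha3
  -- a ≤ b
  have hsqrtn1 : (1:ℝ) ≤ Real.sqrt n := by
    rw [show (1:ℝ) = Real.sqrt 1 by simp]
    exact Real.sqrt_le_sqrt hn1'
  have hsqrtn : (2*d+2)/c ≤ Real.sqrt n := by
    have h1 : (((2*d+2)/c)^2 : ℝ) ≤ n := by
      calc (((2*d+2)/c)^2 : ℝ) ≤ (⌈((2*d+2)/c)^2⌉₊ : ℝ) := Nat.le_ceil _
        _ ≤ n := by exact_mod_cast Nat.le_of_succ_le hnN₂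
    exact (Real.le_sqrt (by positivity) hn0'.le).2 h1
  have hcn : d * Real.log n + 1 ≤ c * n := by
    have h1 : Real.log n ≤ 2*Real.sqrt n := log_le_two_sqrt hn0'
    have h2 : c * (n:ℝ) = (c * Real.sqrt n) * Real.sqrt n := by
      rw [mul_assoc, Real.mul_self_sqrt hn0'.le]
    have h3 : (2*d+2) ≤ c * Real.sqrt n := by
      rw [div_le_iff₀ hc0] at hsqrtn; linarith [hsqrtn]
    have h4 : (2*d+2) * Real.sqrt n ≤ (c * Real.sqrt n) * Real.sqrt n :=
      mul_le_mul_of_nonneg_right h3 (Real.sqrt_nonneg _)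
    have h5 : d * Real.log n + 1 ≤ (2*d+2) * Real.sqrt n := by
      have := mul_le_mul_of_nonneg_left h1 hd.le
      nlinarith [hsqrtn1]
    linarith [h2 ▸ h4]
  have hcn0 : (0:ℝ) < c * n := by positivity
  have hab : a ≤ b := by
    apply Nat.le_floor
    have := (Nat.ceil_lt_add_one hdl0).le
    calc (a:ℝ) ≤ d * Real.log n + 1 := this
      _ ≤ c * n := hcn
  have hb3 : 3 ≤ b := le_trans ha3 hab
  have hb3' : (3:ℝ) ≤ (b:ℝ) := by exact_mod_cast hb3
  constructor
  · -- lower bound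
    have hS := core_lower (by omega : 2 ≤ a) hab
    have h1 : Real.log c + Real.log n ≤ Real.log ((b:ℝ)+1) := by
      have hlt := (Nat.lt_floor_add_one (c*(n:ℝ))).le
      have := Real.log_le_log hcn0 hlt
      rwa [Real.log_mul hc0.ne' hn0'.ne'] at this
    have h2 : Real.log (a:ℝ) ≤ Real.log (d * Real.log n + 1) :=
      Real.log_le_log (by linarith) (Nat.ceil_lt_add_one hdl0).le
    have h3 : Real.log (d * Real.log n + 1) ≤ (ε/2) * Real.log n := by
      have ht : 16*(d+1)/ε^2 ≤ Real.log n :=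
        le_trans (le_trans (le_max_left _ _) (le_max_right _ _)) hlogR
      have hx0 : (0:ℝ) < d * Real.log n + 1 := by linarith
      have hs := log_le_two_sqrt hx0
      have hsq : Real.sqrt (d * Real.log n + 1) ≤ (ε/4) * Real.log n := by
        rw [show (ε/4) * Real.log n = Real.sqrt (((ε/4) * Real.log n)^2) by
          rw [Real.sqrt_sq (by positivity)]]
        apply Real.sqrt_le_sqrt
        have he2 : (0:ℝ) < ε^2 := by positivity
        rw [div_le_iff₀ he2] at ht
        nlinarith [hlog1, hd.le, hε.le]
      linarith
    have h4 : (10 - 4*Real.log c)/(2*ε) ≤ Real.log n :=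
      le_trans (le_trans (le_max_right _ _) (le_max_right _ _)) hlogR
    have h5 : 10 - 4*Real.log c ≤ 2*ε*Real.log n := by
      rw [div_le_iff₀ (by positivity)] at h4; linarith
    calc (1 - ε) * (4 * Real.log n)
        ≤ 4*(Real.log ((b:ℝ)+1) - Real.log a) - 10 := by linarith
      _ ≤ _ := hS
  · -- upper bound
    have hS := core_upper ha3 hab
    have hbn : (b:ℝ) ≤ (n:ℝ) := by
      calc (b:ℝ) ≤ c * n := Nat.floor_le hcn0.le
        _ ≤ 1 * n := by apply mul_le_mul_of_nonneg_right hc1.le hn0'.le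
        _ = n := by ring
    have h1 : Real.log (b:ℝ) ≤ Real.log n := Real.log_le_log (by linarith) hbn
    refine le_trans hS ?_
    have h2 := mul_nonneg hε.le hlog0
    nlinarith
end

section
/- Fix positive integers n and sizes k ≤ ℓ with ℓ ≤ cn for a constant c ≤ 1/3 and k ≥ 4. Define g(k,ℓ) as the number of pairs (x,y) of positive integers such that (x,k,y,ℓ) is a good quadruple, meaning: 1 ≤ x < x+k ≤ 2n and 1 ≤ y < y+ℓ ≤ 2n; any two of the numbers x, x+k, y, y+ℓ differ by at least 2; and the intervals interlace (x < y < x+k < y+ℓ or y < x < y+ℓ < x+k). Then (4−6c)·n·(k−3) ≤ g(k,ℓ) ≤ 4·n·k. -/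
abbrev GoodQuad (n x k y l : ℕ) : Prop :=
  (1 ≤ x ∧ x + k ≤ 2 * n) ∧ (1 ≤ y ∧ y + l ≤ 2 * n) ∧
  (x + 2 ≤ y ∨ y + 2 ≤ x) ∧ (x + 2 ≤ y + l ∨ y + l + 2 ≤ x) ∧
  (x + k + 2 ≤ y ∨ y + 2 ≤ x + k) ∧ (x + k + 2 ≤ y + l ∨ y + l + 2 ≤ x + k) ∧
  (x + 2 ≤ x + k) ∧ (y + 2 ≤ y + l) ∧
  ((x < y ∧ y < x + k ∧ x + k < y + l) ∨ (y < x ∧ x < y + l ∧ y + l < x + k))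

def goodCount (n k l : ℕ) : ℕ :=
  ((Finset.Icc 1 (2 * n) ×ˢ Finset.Icc 1 (2 * n)).filter
    (fun p => GoodQuad n p.1 k p.2 l)).card

lemma goodCount_upper (n k l : ℕ) : goodCount n k l ≤ 2 * n * (2 * k) := by
  classical
  unfold goodCount
  set s := ((Finset.Icc 1 (2 * n) ×ˢ Finset.Icc 1 (2 * n)).filter
    (fun p => GoodQuad n p.1 k p.2 l)) with hs
  have hmap : ∀ p ∈ s, p.2 ∈ Finset.Icc 1 (2 * n) := by
    intro p hp
    simp only [hs, Finset.mem_filter, Finset.mem_product] at hp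
    exact hp.1.2
  rw [Finset.card_eq_sum_card_fiberwise hmap]
  have hfib : ∀ y ∈ Finset.Icc 1 (2 * n),
      (s.filter (fun p => p.2 = y)).card ≤ 2 * k := by
    intro y _
    have hsub : (s.filter (fun p => p.2 = y)).card ≤
        (Finset.Ioo (y - k) y ∪ Finset.Ioo (y + l - k) (y + l)).card := by
      apply Finset.card_le_card_of_injOn (fun p => p.1)
      · intro p hp
        simp only [hs, Finset.mem_coe, Finset.mem_filter, Finset.mem_product, Finset.mem_Icc,
          GoodQuad] at hp
        simp only [Finset.mem_coe, Finset.mem_union, Finset.mem_Ioo]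
        omega
      · intro p hp q hq h
        simp only [Finset.mem_coe, Finset.mem_filter] at hp hq
        exact Prod.ext h (hp.2.trans hq.2.symm)
    refine hsub.trans ?_
    refine (Finset.card_union_le _ _).trans ?_
    simp only [Nat.card_Ioo]
    omega
  calc ∑ y ∈ Finset.Icc 1 (2 * n), (s.filter (fun p => p.2 = y)).card
      ≤ ∑ y ∈ Finset.Icc 1 (2 * n), 2 * k := Finset.sum_le_sum hfib
    _ = 2 * n * (2 * k) := by simp [Nat.card_Icc, mul_comm]

lemma goodCount_lower (n k l : ℕ) (hk : 4 ≤ k) (hkl : k ≤ l) (h2n : k + l ≤ 2 * n) :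
    2 * ((2 * n + 2 - l - k) * (k - 3)) ≤ goodCount n k l := by
  classical
  set M := 2 * n + 2 - l - k with hM
  set T1 : Finset (ℕ × ℕ) :=
    ((Finset.Icc 1 M) ×ˢ (Finset.Icc 2 (k - 2))).image (fun p => (p.1, p.1 + p.2)) with hT1
  set T2 : Finset (ℕ × ℕ) :=
    ((Finset.Icc 1 M) ×ˢ (Finset.Icc (l - k + 2) (l - 2))).image
      (fun p => (p.1 + p.2, p.1)) with hT2
  set S := ((Finset.Icc 1 (2 * n) ×ˢ Finset.Icc 1 (2 * n)).filter
    (fun p => GoodQuad n p.1 k p.2 l)) with hS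
  have hT1S : T1 ⊆ S := by
    intro p hp
    simp only [hT1, Finset.mem_image, Finset.mem_product, Finset.mem_Icc] at hp
    obtain ⟨⟨a, b⟩, ⟨⟨ha1, ha2⟩, hb1, hb2⟩, rfl⟩ := hp
    simp only [hS, Finset.mem_filter, Finset.mem_product, Finset.mem_Icc, GoodQuad]
    omega
  have hT2S : T2 ⊆ S := by
    intro p hp
    simp only [hT2, Finset.mem_image, Finset.mem_product, Finset.mem_Icc] at hp
    obtain ⟨⟨a, b⟩, ⟨⟨ha1, ha2⟩, hb1, hb2⟩, rfl⟩ := hp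
    simp only [hS, Finset.mem_filter, Finset.mem_product, Finset.mem_Icc, GoodQuad]
    omega
  have hdisj : Disjoint T1 T2 := by
    rw [Finset.disjoint_left]
    intro p hp1 hp2
    simp only [hT1, Finset.mem_image, Finset.mem_product, Finset.mem_Icc] at hp1
    simp only [hT2, Finset.mem_image, Finset.mem_product, Finset.mem_Icc] at hp2
    obtain ⟨⟨a, b⟩, ⟨⟨ha1, ha2⟩, hb1, hb2⟩, he⟩ := hp1
    obtain ⟨⟨a', b'⟩, ⟨⟨ha1', ha2'⟩, hb1', hb2'⟩, he'⟩ := hp2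
    have : p.1 = a ∧ p.2 = a + b := by rw [← he]; exact ⟨rfl, rfl⟩
    have : p.1 = a' + b' ∧ p.2 = a' := by rw [← he']; exact ⟨rfl, rfl⟩
    omega
  have hc1 : T1.card = M * (k - 3) := by
    rw [hT1, Finset.card_image_of_injective, Finset.card_product]
    · simp only [Nat.card_Icc]; congr 1 <;> omega
    · intro p q hpq
      simp only [Prod.mk.injEq] at hpq
      exact Prod.ext hpq.1 (by omega)
  have hc2 : T2.card = M * (k - 3) := by
    rw [hT2, Finset.card_image_of_injective, Finset.card_product]
    · simp only [Nat.card_Icc]; congr 1 <;> omega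
    · intro p q hpq
      simp only [Prod.mk.injEq] at hpq
      exact Prod.ext hpq.2 (by omega)
  have hunion : (T1 ∪ T2).card = 2 * (M * (k - 3)) := by
    rw [Finset.card_union_of_disjoint hdisj, hc1, hc2]; ring
  have hsub : T1 ∪ T2 ⊆ S := Finset.union_subset hT1S hT2S
  calc 2 * (M * (k - 3)) = (T1 ∪ T2).card := hunion.symm
    _ ≤ S.card := Finset.card_le_card hsub
    _ = goodCount n k l := rfl

/-- for `4 ≤ k ≤ ℓ ≤ cn` with `c ≤ 1/3`, the count `g(k,ℓ)` of good
quadruples satisfies `(4−6c)·n·(k−3) ≤ g(k,ℓ) ≤ 4·n·k`. -/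
theorem goodCount_bounds (n k l : ℕ) (c : ℝ) (hc0 : 0 < c) (hc : c ≤ 1 / 3)
    (hk : 4 ≤ k) (hkl : k ≤ l) (hl : (l : ℝ) ≤ c * n) :
    (4 - 6 * c) * (n : ℝ) * ((k : ℝ) - 3) ≤ (goodCount n k l : ℝ) ∧
      (goodCount n k l : ℝ) ≤ 4 * (n : ℝ) * (k : ℝ) := by
  have hn0 : (0 : ℝ) ≤ (n : ℝ) := Nat.cast_nonneg n
  have h3l : 3 * l ≤ n := by
    have h1 : (3 * l : ℝ) ≤ 3 * (c * n) := by linarith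
    have h2 : 3 * (c * n) ≤ (n : ℝ) := by nlinarith
    exact_mod_cast h1.trans h2
  have h2n : k + l ≤ 2 * n := by omega
  constructor
  · have hlow := goodCount_lower n k l hk hkl h2n
    have hlow' : ((2 * ((2 * n + 2 - l - k) * (k - 3)) : ℕ) : ℝ) ≤ (goodCount n k l : ℝ) :=
      Nat.cast_le.mpr hlow
    have hA : ((2 * n + 2 - l - k : ℕ) : ℝ) = 2 * (n : ℝ) + 2 - l - k := by
      have : (2 * n + 2 - l - k) + l + k = 2 * n + 2 := by omega
      have := congrArg (fun m : ℕ => (m : ℝ)) this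
      push_cast at this
      linarith
    have hk3 : ((k - 3 : ℕ) : ℝ) = (k : ℝ) - 3 := by
      have : (k - 3) + 3 = k := by omega
      have := congrArg (fun m : ℕ => (m : ℝ)) this
      push_cast at this
      linarith
    have hcast : ((2 * ((2 * n + 2 - l - k) * (k - 3)) : ℕ) : ℝ)
        = 2 * ((2 * (n : ℝ) + 2 - l - k) * ((k : ℝ) - 3)) := by
      push_cast [hA, hk3]
      ring
    rw [hcast] at hlow'
    refine le_trans ?_ hlow'
    have hkR : (4 : ℝ) ≤ (k : ℝ) := by exact_mod_cast hk
    have hklR : (k : ℝ) ≤ (l : ℝ) := by exact_mod_cast hkl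
    have hcn : 0 ≤ c * n := mul_nonneg hc0.le hn0
    have key : (4 - 6 * c) * (n : ℝ) ≤ 2 * (2 * (n : ℝ) + 2 - l - k) := by
      nlinarith
    have hk30 : (0 : ℝ) ≤ (k : ℝ) - 3 := by linarith
    calc (4 - 6 * c) * (n : ℝ) * ((k : ℝ) - 3)
        ≤ 2 * (2 * (n : ℝ) + 2 - l - k) * ((k : ℝ) - 3) :=
          mul_le_mul_of_nonneg_right key hk30
      _ = 2 * ((2 * (n : ℝ) + 2 - l - k) * ((k : ℝ) - 3)) := by ring
  · have hup := goodCount_upper n k l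
    have : (goodCount n k l : ℝ) ≤ ((2 * n * (2 * k) : ℕ) : ℝ) := Nat.cast_le.mpr hup
    push_cast at this
    linarith
end

section
/- For positive integers k ≤ ℓ ≤ 2n, the number of pairs (x,y) such that 1 ≤ x < x+k ≤ 2n, 1 ≤ y < y+ℓ ≤ 2n and the intervals [x,x+k] and [y,y+ℓ] interlace (i.e., x < y < x+k < y+ℓ or y < x < y+ℓ < x+k) is at most 4nk. -/
/-- for positive integers `k ≤ ℓ ≤ 2n`, the number of pairs `(x,y)` with
`1 ≤ x < x + k ≤ 2n`, `1 ≤ y < y + ℓ ≤ 2n` whose intervals interlace is at most `4nk`. -/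
theorem interlacing_pairs_le (n k l : ℕ) (hk : 1 ≤ k) (hkl : k ≤ l) (hl : l ≤ 2 * n) :
    ((Finset.Icc 1 (2 * n) ×ˢ Finset.Icc 1 (2 * n)).filter
        (fun p : ℕ × ℕ =>
          1 ≤ p.1 ∧ p.1 + k ≤ 2 * n ∧ 1 ≤ p.2 ∧ p.2 + l ≤ 2 * n ∧
          ((p.1 < p.2 ∧ p.2 < p.1 + k ∧ p.1 + k < p.2 + l) ∨
            (p.2 < p.1 ∧ p.1 < p.2 + l ∧ p.2 + l < p.1 + k)))).card ≤ 4 * n * k := by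
  classical
  have h : ((Finset.Icc 1 (2 * n) ×ˢ Finset.Icc 1 (2 * n)).filter
        (fun p : ℕ × ℕ =>
          1 ≤ p.1 ∧ p.1 + k ≤ 2 * n ∧ 1 ≤ p.2 ∧ p.2 + l ≤ 2 * n ∧
          ((p.1 < p.2 ∧ p.2 < p.1 + k ∧ p.1 + k < p.2 + l) ∨
            (p.2 < p.1 ∧ p.1 < p.2 + l ∧ p.2 + l < p.1 + k)))).card ≤
      (Finset.Icc 1 (2 * n) ×ˢ Finset.range (2 * k - 2)).card :=
    Finset.card_le_card_of_injOn
      (fun p : ℕ × ℕ =>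
        (p.2, if p.1 < p.2 then p.2 - p.1 - 1 else (k - 1) + (p.1 - (p.2 + l - k) - 1))) ?_ ?_
  · refine h.trans ?_
    rw [Finset.card_product, Nat.card_Icc, Finset.card_range]
    have h2n : 2 * n + 1 - 1 = 2 * n := by omega
    nlinarith [Nat.sub_le (2 * k) 2]
  · intro p hp
    simp only [Finset.mem_coe, Finset.mem_filter, Finset.mem_product, Finset.mem_Icc, Finset.mem_range] at hp ⊢
    obtain ⟨⟨hx, hy⟩, h1, h2, h3, h4, hcase⟩ := hp
    split_ifs with hlt
    · rcases hcase with ⟨a, b, c⟩ | ⟨a, b, c⟩ <;> omega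
    · rcases hcase with ⟨a, b, c⟩ | ⟨a, b, c⟩ <;> omega
  · intro p hp q hq heq
    simp only [Finset.mem_coe, Finset.mem_filter, Finset.mem_product, Finset.mem_Icc] at hp hq
    obtain ⟨⟨hx, hy⟩, h1, h2, h3, h4, hcase⟩ := hp
    obtain ⟨⟨hx', hy'⟩, h1', h2', h3', h4', hcase'⟩ := hq
    have hsnd : p.2 = q.2 := congrArg Prod.fst heq
    have heq2 := congrArg Prod.snd heq
    dsimp only at heq2
    have hpq : p.1 = q.1 := by
      split_ifs at heq2 with hA hB hB <;>
        rcases hcase with ⟨a, b, c⟩ | ⟨a, b, c⟩ <;>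
        rcases hcase' with ⟨a', b', c'⟩ | ⟨a', b', c'⟩ <;> omega
    exact Prod.ext hpq hsnd
end

section
/- Let H be a Catalan-pair graph on v vertices with i isolated vertices, let H'' denote H with its isolated vertices removed, and consider any two-sided non-crossing arc diagram on 2n points. If N' denotes the number of vertex sets inducing a copy of H'' all of whose arcs have both endpoints in the interval [1, n/2], then the number N of induced copies of H satisfies N ≥ N'·binom(⌈n/4⌉, i). (Deterministic statement: at most n/2 arcs have an endpoint in [1,n/2], so at least n/2 arcs lie entirely outside; at least n/4 of these have the same color, and adjoining any i of these same-colored arcs to an induced copy of H'' in [1,n/2] yields an induced copy of H.) -/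
/-- A family of arcs, each recorded as an ordered pair of endpoints: endpoints are
pairwise distinct across arcs, and the arcs are pairwise non-crossing. -/
def IsArcFamily (M : Finset (ℕ × ℕ)) : Prop :=
  (∀ p ∈ M, p.1 < p.2) ∧
  (∀ p ∈ M, ∀ q ∈ M, p ≠ q → p.1 ≠ q.1 ∧ p.1 ≠ q.2 ∧ p.2 ≠ q.1 ∧ p.2 ≠ q.2) ∧
  (∀ p ∈ M, ∀ q ∈ M, ¬(p.1 < q.1 ∧ q.1 < p.2 ∧ p.2 < q.2))

/-- A two-sided non-crossing arc diagram on the `2n` points `1,…,2n`: a non-crossing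
perfect matching `R` of the red points and a non-crossing perfect matching `B` of the
blue points, which together cover each of the `2n` points exactly once. -/
def IsTwoSidedDiagram (n : ℕ) (R B : Finset (ℕ × ℕ)) : Prop :=
  IsArcFamily R ∧ IsArcFamily B ∧
  (∀ x, x ∈ Finset.Icc 1 (2 * n) ↔
      ((∃ p ∈ R, x = p.1 ∨ x = p.2) ∨ (∃ p ∈ B, x = p.1 ∨ x = p.2))) ∧
  (∀ p ∈ R, ∀ q ∈ B, p.1 ≠ q.1 ∧ p.1 ≠ q.2 ∧ p.2 ≠ q.1 ∧ p.2 ≠ q.2)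

/-- Two arcs have alternating endpoints along the line. -/
def alternates (p q : ℕ × ℕ) : Prop :=
  (p.1 < q.1 ∧ q.1 < p.2 ∧ p.2 < q.2) ∨ (q.1 < p.1 ∧ p.1 < q.2 ∧ q.2 < p.2)

/-- The Catalan-pair graph of a diagram with top arcs `R` and bottom arcs `B`: vertices
are arcs (left summand = top, right summand = bottom), and two vertices are adjacent iff
both are genuine arcs of the diagram and their endpoints alternate. -/
def CPGraph (R B : Finset (ℕ × ℕ)) : SimpleGraph ((ℕ × ℕ) ⊕ (ℕ × ℕ)) where
  Adj u v := Sum.elim (· ∈ R) (· ∈ B) u ∧ Sum.elim (· ∈ R) (· ∈ B) v ∧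
    alternates (Sum.elim id id u) (Sum.elim id id v)
  symm := by
    constructor
    intro u v h
    refine ⟨h.2.1, h.1, ?_⟩
    unfold alternates at *
    tauto
  loopless := by
    constructor
    intro u h
    rcases h.2.2 with ⟨h1, _, _⟩ | ⟨h1, _, _⟩ <;> exact lt_irrefl _ h1
open Finset in
lemma arcs_card {n : ℕ} {R B : Finset (ℕ × ℕ)} (h : IsTwoSidedDiagram n R B) :
    R.card + B.card = n := by
  classical
  obtain ⟨⟨hR1, hR2, _⟩, ⟨hB1, hB2, _⟩, hcov, hRB⟩ := h
  have hE : Finset.Icc 1 (2*n)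
      = (R.image Prod.fst ∪ R.image Prod.snd) ∪ (B.image Prod.fst ∪ B.image Prod.snd) := by
    ext x
    rw [hcov x]
    simp only [mem_union, mem_image]
    constructor
    · rintro (⟨p, hp, rfl | rfl⟩ | ⟨p, hp, rfl | rfl⟩)
      · exact Or.inl (Or.inl ⟨p, hp, rfl⟩)
      · exact Or.inl (Or.inr ⟨p, hp, rfl⟩)
      · exact Or.inr (Or.inl ⟨p, hp, rfl⟩)
      · exact Or.inr (Or.inr ⟨p, hp, rfl⟩)
    · rintro ((⟨p, hp, rfl⟩ | ⟨p, hp, rfl⟩) | (⟨p, hp, rfl⟩ | ⟨p, hp, rfl⟩))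
      · exact Or.inl ⟨p, hp, Or.inl rfl⟩
      · exact Or.inl ⟨p, hp, Or.inr rfl⟩
      · exact Or.inr ⟨p, hp, Or.inl rfl⟩
      · exact Or.inr ⟨p, hp, Or.inr rfl⟩
  have d1 : Disjoint (R.image Prod.fst) (R.image Prod.snd) := by
    rw [Finset.disjoint_left]
    rintro a ha hb
    simp only [mem_image] at ha hb
    obtain ⟨p, hp, rfl⟩ := ha
    obtain ⟨q, hq, hpq⟩ := hb
    by_cases hne : p = q
    · subst hne; have := hR1 p hp; omega
    · exact (hR2 p hp q hq hne).2.1 hpq.symm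
  have d2 : Disjoint (B.image Prod.fst) (B.image Prod.snd) := by
    rw [Finset.disjoint_left]
    rintro a ha hb
    simp only [mem_image] at ha hb
    obtain ⟨p, hp, rfl⟩ := ha
    obtain ⟨q, hq, hpq⟩ := hb
    by_cases hne : p = q
    · subst hne; have := hB1 p hp; omega
    · exact (hB2 p hp q hq hne).2.1 hpq.symm
  have d3 : Disjoint (R.image Prod.fst ∪ R.image Prod.snd)
      (B.image Prod.fst ∪ B.image Prod.snd) := by
    rw [Finset.disjoint_left]
    rintro a ha hb
    simp only [mem_union, mem_image] at ha hb
    rcases ha with ⟨p, hp, rfl⟩ | ⟨p, hp, rfl⟩ <;>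
      rcases hb with ⟨q, hq, hpq⟩ | ⟨q, hq, hpq⟩
    · exact (hRB p hp q hq).1 hpq.symm
    · exact (hRB p hp q hq).2.1 hpq.symm
    · exact (hRB p hp q hq).2.2.1 hpq.symm
    · exact (hRB p hp q hq).2.2.2 hpq.symm
  have c1 : (R.image Prod.fst).card = R.card :=
    Finset.card_image_of_injOn (fun p hp q hq hpq => by
      by_contra hne; exact (hR2 p hp q hq hne).1 hpq)
  have c2 : (R.image Prod.snd).card = R.card :=
    Finset.card_image_of_injOn (fun p hp q hq hpq => by
      by_contra hne; exact (hR2 p hp q hq hne).2.2.2 hpq)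
  have c3 : (B.image Prod.fst).card = B.card :=
    Finset.card_image_of_injOn (fun p hp q hq hpq => by
      by_contra hne; exact (hB2 p hp q hq hne).1 hpq)
  have c4 : (B.image Prod.snd).card = B.card :=
    Finset.card_image_of_injOn (fun p hp q hq hpq => by
      by_contra hne; exact (hB2 p hp q hq hne).2.2.2 hpq)
  have hcard := congrArg Finset.card hE
  rw [Nat.card_Icc, card_union_of_disjoint d3, card_union_of_disjoint d1,
    card_union_of_disjoint d2, c1, c2, c3, c4] at hcard
  omega

open Finset in
lemma outside_card {n : ℕ} {R B : Finset (ℕ × ℕ)} (h : IsTwoSidedDiagram n R B) :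
    n - n / 2 ≤ (R.filter fun p => n / 2 < p.1).card + (B.filter fun p => n / 2 < p.1).card := by
  classical
  have htot := arcs_card h
  obtain ⟨⟨hR1, hR2, _⟩, ⟨hB1, hB2, _⟩, hcov, hRB⟩ := h
  set Rin := R.filter (fun p => ¬ n / 2 < p.1) with hRin
  set Bin := B.filter (fun p => ¬ n / 2 < p.1) with hBin
  have hRsplit : (R.filter fun p => n / 2 < p.1).card + Rin.card = R.card :=
    Finset.card_filter_add_card_filter_not _
  have hBsplit : (B.filter fun p => n / 2 < p.1).card + Bin.card = B.card :=
    Finset.card_filter_add_card_filter_not _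
  have hdisj : Disjoint Rin Bin := by
    rw [Finset.disjoint_left]
    intro p hp hq
    exact (hRB p (Finset.mem_filter.1 hp).1 p (Finset.mem_filter.1 hq).1).1 rfl
  have hin : Rin.card + Bin.card ≤ n / 2 := by
    have hmap : ∀ p ∈ Rin ∪ Bin, p.1 ∈ Finset.Icc 1 (n / 2) := by
      intro p hp
      rcases Finset.mem_union.1 hp with hp' | hp' <;>
        obtain ⟨hpm, hple⟩ := Finset.mem_filter.1 hp'
      · have h1 : p.1 ∈ Finset.Icc 1 (2*n) := (hcov p.1).2 (Or.inl ⟨p, hpm, Or.inl rfl⟩)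
        rw [Finset.mem_Icc] at h1 ⊢
        omega
      · have h1 : p.1 ∈ Finset.Icc 1 (2*n) := (hcov p.1).2 (Or.inr ⟨p, hpm, Or.inl rfl⟩)
        rw [Finset.mem_Icc] at h1 ⊢
        omega
    have hinj : (↑(Rin ∪ Bin) : Set (ℕ × ℕ)).InjOn Prod.fst := by
      intro p hp q hq hpq
      simp only [Finset.coe_union, Set.mem_union, Finset.mem_coe] at hp hq
      have hp' : p ∈ R ∨ p ∈ B := by
        rcases hp with hp | hp
        · exact Or.inl (Finset.mem_filter.1 hp).1
        · exact Or.inr (Finset.mem_filter.1 hp).1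
      have hq' : q ∈ R ∨ q ∈ B := by
        rcases hq with hq | hq
        · exact Or.inl (Finset.mem_filter.1 hq).1
        · exact Or.inr (Finset.mem_filter.1 hq).1
      by_contra hne
      rcases hp' with hp' | hp' <;> rcases hq' with hq' | hq'
      · exact (hR2 p hp' q hq' hne).1 hpq
      · exact (hRB p hp' q hq').1 hpq
      · exact (hRB q hq' p hp').1 hpq.symm
      · exact (hB2 p hp' q hq' hne).1 hpq
    calc Rin.card + Bin.card = (Rin ∪ Bin).card := (card_union_of_disjoint hdisj).symm
      _ ≤ (Finset.Icc 1 (n / 2)).card := Finset.card_le_card_of_injOn Prod.fst hmap hinj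
      _ = n / 2 := by rw [Nat.card_Icc]; omega
  omega

open Finset in
lemma family_not_alternates {M : Finset (ℕ × ℕ)} (hM : IsArcFamily M)
    {p q : ℕ × ℕ} (hp : p ∈ M) (hq : q ∈ M) : ¬ alternates p q := by
  rintro (⟨h1, h2, h3⟩ | ⟨h1, h2, h3⟩)
  · exact hM.2.2 p hp q hq ⟨h1, h2, h3⟩
  · exact hM.2.2 q hq p hp ⟨h1, h2, h3⟩

lemma key {V : Type} [Fintype V] (H : SimpleGraph V) {n : ℕ} {R B : Finset (ℕ × ℕ)}
    (hdiag : IsTwoSidedDiagram n R B)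
    (ι : (ℕ × ℕ) → (ℕ × ℕ) ⊕ (ℕ × ℕ)) (hι : Function.Injective ι)
    (hιelim : ∀ p, Sum.elim id id (ι p) = p)
    (T₀ : Finset (ℕ × ℕ))
    (hTmem : ∀ p ∈ T₀, Sum.elim (· ∈ R) (· ∈ B) (ι p))
    (hTout : ∀ p ∈ T₀, n / 2 < p.1)
    (hTnc : ∀ p ∈ T₀, ∀ q ∈ T₀, ¬ alternates p q) :
    Nat.card {S : Finset ((ℕ × ℕ) ⊕ (ℕ × ℕ)) //
        (∀ a ∈ S, Sum.elim (· ∈ R) (· ∈ B) a) ∧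
        (∀ a ∈ S, 1 ≤ (Sum.elim id id a).1 ∧ (Sum.elim id id a).2 ≤ n / 2) ∧
        Nonempty ((H.induce {v : V | ∃ w, H.Adj v w}) ≃g
          (CPGraph R B).induce (↑S : Set ((ℕ × ℕ) ⊕ (ℕ × ℕ))))} *
      Nat.choose T₀.card (Nat.card {v : V // ∀ w, ¬H.Adj v w}) ≤
    Nat.card {S : Finset ((ℕ × ℕ) ⊕ (ℕ × ℕ)) //
        (∀ a ∈ S, Sum.elim (· ∈ R) (· ∈ B) a) ∧
        Nonempty (H ≃g (CPGraph R B).induce (↑S : Set ((ℕ × ℕ) ⊕ (ℕ × ℕ))))} := by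
  classical
  set i := Nat.card {v : V // ∀ w, ¬H.Adj v w} with hi
  set A := {S : Finset ((ℕ × ℕ) ⊕ (ℕ × ℕ)) //
        (∀ a ∈ S, Sum.elim (· ∈ R) (· ∈ B) a) ∧
        (∀ a ∈ S, 1 ≤ (Sum.elim id id a).1 ∧ (Sum.elim id id a).2 ≤ n / 2) ∧
        Nonempty ((H.induce {v : V | ∃ w, H.Adj v w}) ≃g
          (CPGraph R B).induce (↑S : Set ((ℕ × ℕ) ⊕ (ℕ × ℕ))))} with hA
  set C := {S : Finset ((ℕ × ℕ) ⊕ (ℕ × ℕ)) //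
        (∀ a ∈ S, Sum.elim (· ∈ R) (· ∈ B) a) ∧
        Nonempty (H ≃g (CPGraph R B).induce (↑S : Set ((ℕ × ℕ) ⊕ (ℕ × ℕ))))} with hC
  -- basic facts
  have farc : ∀ a : (ℕ × ℕ) ⊕ (ℕ × ℕ), Sum.elim (· ∈ R) (· ∈ B) a →
      (Sum.elim id id a).1 < (Sum.elim id id a).2 := by
    rintro (p | p) h
    · exact hdiag.1.1 p h
    · exact hdiag.2.1.1 p h
  -- finiteness
  have hsub : ∀ (S : Finset ((ℕ × ℕ) ⊕ (ℕ × ℕ))),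
      (∀ a ∈ S, Sum.elim (· ∈ R) (· ∈ B) a) →
      S ⊆ R.image Sum.inl ∪ B.image Sum.inr := by
    rintro S hS (p | p) ha <;> simp only [Finset.mem_union, Finset.mem_image]
    · exact Or.inl ⟨p, hS _ ha, rfl⟩
    · exact Or.inr ⟨p, hS _ ha, rfl⟩
  have finC : Finite C :=
    Finite.of_injective
      (fun s : C => (⟨s.1, Finset.mem_powerset.2 (hsub _ s.2.1)⟩ :
        {x // x ∈ (R.image Sum.inl ∪ B.image Sum.inr).powerset}))
      (by intro a b h; apply Subtype.ext; simpa using congrArg Subtype.val h)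
  have finA : Finite A :=
    Finite.of_injective
      (fun s : A => (⟨s.1, Finset.mem_powerset.2 (hsub _ s.2.1)⟩ :
        {x // x ∈ (R.image Sum.inl ∪ B.image Sum.inr).powerset}))
      (by intro a b h; apply Subtype.ext; simpa using congrArg Subtype.val h)
  -- the construction
  have hmain : ∀ (x : A) (T : Finset (ℕ × ℕ)), T ⊆ T₀ → T.card = i →
      (∀ a ∈ x.1 ∪ T.image ι, Sum.elim (· ∈ R) (· ∈ B) a) ∧
      Nonempty (H ≃g (CPGraph R B).induce
        (↑(x.1 ∪ T.image ι) : Set ((ℕ × ℕ) ⊕ (ℕ × ℕ)))) := by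
    rintro ⟨S', hS'mem, hS'le, ⟨e⟩⟩ T hTsub hTcard
    set T' := T.image ι with hT'
    have hT'mem : ∀ a ∈ T', Sum.elim (· ∈ R) (· ∈ B) a := by
      intro a ha
      obtain ⟨p, hp, rfl⟩ := Finset.mem_image.1 ha
      exact hTmem p (hTsub hp)
    have cond1 : ∀ a ∈ S' ∪ T', Sum.elim (· ∈ R) (· ∈ B) a := by
      intro a ha
      rcases Finset.mem_union.1 ha with ha | ha
      · exact hS'mem a ha
      · exact hT'mem a ha
    have hS'low : ∀ a ∈ S', (Sum.elim id id a).1 ≤ n / 2 ∧ (Sum.elim id id a).2 ≤ n / 2 := by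
      intro a ha
      have h1 := (hS'le a ha).2
      have h2 := farc a (hS'mem a ha)
      omega
    have hT'high : ∀ a ∈ T', n / 2 < (Sum.elim id id a).1 := by
      intro a ha
      obtain ⟨p, hp, rfl⟩ := Finset.mem_image.1 ha
      rw [hιelim p]
      exact hTout p (hTsub hp)
    have hdisj : ∀ a, a ∈ S' → a ∈ T' → False := by
      intro a h1 h2
      have := (hS'low a h1).1
      have := hT'high a h2
      omega
    have noadj1 : ∀ a ∈ T', ∀ b ∈ T', ¬ (CPGraph R B).Adj a b := by
      intro a ha b hb hadj
      obtain ⟨p, hp, rfl⟩ := Finset.mem_image.1 ha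
      obtain ⟨q, hq, rfl⟩ := Finset.mem_image.1 hb
      have := hadj.2.2
      rw [hιelim p, hιelim q] at this
      exact hTnc p (hTsub hp) q (hTsub hq) this
    have noadj2 : ∀ a ∈ S', ∀ b ∈ T', ¬ (CPGraph R B).Adj a b := by
      intro a ha b hb hadj
      have h1 := hS'low a ha
      have h2 := hT'high b hb
      have h3 := farc b (hT'mem b hb)
      rcases hadj.2.2 with ⟨u1, u2, u3⟩ | ⟨u1, u2, u3⟩ <;> omega
    -- the isolated-vertex matching
    have cardeq : Nat.card {v : V // ¬ v ∈ {v : V | ∃ w, H.Adj v w}} =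
        Nat.card {a : (ℕ × ℕ) ⊕ (ℕ × ℕ) // a ∈ T'} := by
      have e1 : Nat.card {v : V // ¬ v ∈ {v : V | ∃ w, H.Adj v w}} = i := by
        rw [hi]
        exact Nat.card_congr (Equiv.subtypeEquivRight (fun v => by
          simp only [Set.mem_setOf_eq, not_exists]))
      have e2 : Nat.card {a : (ℕ × ℕ) ⊕ (ℕ × ℕ) // a ∈ T'} = i := by
        rw [Nat.card_eq_finsetCard, hT', Finset.card_image_of_injective _ hι, hTcard]
      rw [e1, e2]
    obtain ⟨g⟩ := Finite.card_eq.mp cardeq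
    -- build the bijection
    set P : V → Prop := fun v => v ∈ {v : V | ∃ w, H.Adj v w} with hP
    have memS : ∀ (x : ↥(↑S' : Set ((ℕ × ℕ) ⊕ (ℕ × ℕ)))),
        (x : (ℕ × ℕ) ⊕ (ℕ × ℕ)) ∈ (↑(S' ∪ T') : Set ((ℕ × ℕ) ⊕ (ℕ × ℕ))) := by
      intro x
      simp only [Finset.coe_union, Set.mem_union]
      exact Or.inl x.2
    have memT : ∀ (x : {a : (ℕ × ℕ) ⊕ (ℕ × ℕ) // a ∈ T'}),
        (x : (ℕ × ℕ) ⊕ (ℕ × ℕ)) ∈ (↑(S' ∪ T') : Set ((ℕ × ℕ) ⊕ (ℕ × ℕ))) := by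
      intro x
      simp only [Finset.coe_union, Set.mem_union, Finset.mem_coe]
      exact Or.inr x.2
    set f : V → ↥(↑(S' ∪ T') : Set ((ℕ × ℕ) ⊕ (ℕ × ℕ))) := fun v =>
      if h : P v then ⟨(e ⟨v, h⟩ : ↥(↑S' : Set ((ℕ × ℕ) ⊕ (ℕ × ℕ)))), memS _⟩
      else ⟨(g ⟨v, h⟩ : (ℕ × ℕ) ⊕ (ℕ × ℕ)), memT _⟩ with hf
    have fval_pos : ∀ (v : V) (h : P v), (f v : (ℕ × ℕ) ⊕ (ℕ × ℕ)) = ↑(e ⟨v, h⟩) := by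
      intro v h
      simp only [hf, dif_pos h]
    have fval_neg : ∀ (v : V) (h : ¬ P v), (f v : (ℕ × ℕ) ⊕ (ℕ × ℕ)) = ↑(g ⟨v, h⟩) := by
      intro v h
      simp only [hf, dif_neg h]
    have hmemS' : ∀ (v : V) (h : P v), ((e ⟨v, h⟩ : ↥(↑S' : Set ((ℕ × ℕ) ⊕ (ℕ × ℕ)))) : (ℕ × ℕ) ⊕ (ℕ × ℕ)) ∈ S' :=
      fun v h => (e ⟨v, h⟩).2
    have hbij : Function.Bijective f := by
      constructor
      · intro u v huv
        have huv' := congrArg Subtype.val huv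
        by_cases hu : P u <;> by_cases hv : P v
        · rw [fval_pos u hu, fval_pos v hv] at huv'
          have := e.toEquiv.injective (Subtype.ext huv')
          exact congrArg Subtype.val this
        · rw [fval_pos u hu, fval_neg v hv] at huv'
          exact absurd ((g ⟨v, hv⟩).2) (fun hc => hdisj _ (huv' ▸ hmemS' u hu) hc)
        · rw [fval_neg u hu, fval_pos v hv] at huv'
          exact absurd ((g ⟨u, hu⟩).2) (fun hc => hdisj _ (huv'.symm ▸ hmemS' v hv) hc)
        · rw [fval_neg u hu, fval_neg v hv] at huv'
          have := g.injective (Subtype.ext huv')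
          exact congrArg Subtype.val this
      · rintro ⟨a, ha⟩
        simp only [Finset.coe_union, Set.mem_union, Finset.mem_coe] at ha
        rcases ha with ha | ha
        · set x := e.toEquiv.symm ⟨a, ha⟩ with hx
          refine ⟨↑x, ?_⟩
          have hxP : P ↑x := x.2
          apply Subtype.ext
          rw [fval_pos _ hxP]
          have : (⟨↑x, hxP⟩ : ↥{v : V | ∃ w, H.Adj v w}) = x := Subtype.ext rfl
          rw [this, hx]
          exact congrArg Subtype.val (e.toEquiv.apply_symm_apply ⟨a, ha⟩)
        · set x := g.symm ⟨a, ha⟩ with hx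
          refine ⟨↑x, ?_⟩
          have hxP : ¬ P ↑x := x.2
          apply Subtype.ext
          rw [fval_neg _ hxP]
          have : (⟨↑x, hxP⟩ : {v : V // ¬ P v}) = x := Subtype.ext rfl
          rw [this, hx]
          exact congrArg Subtype.val (g.apply_symm_apply ⟨a, ha⟩)
    refine ⟨cond1, ⟨⟨Equiv.ofBijective f hbij, ?_⟩⟩⟩
    intro u v
    show (CPGraph R B).Adj ↑(f u) ↑(f v) ↔ H.Adj u v
    by_cases hu : P u <;> by_cases hv : P v
    · rw [fval_pos u hu, fval_pos v hv]
      exact e.map_rel_iff' (a := ⟨u, hu⟩) (b := ⟨v, hv⟩)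
    · rw [fval_pos u hu, fval_neg v hv]
      constructor
      · intro hadj
        exact absurd hadj (noadj2 _ (hmemS' u hu) _ (g ⟨v, hv⟩).2)
      · intro hadj
        exact absurd ⟨u, hadj.symm⟩ hv
    · rw [fval_neg u hu, fval_pos v hv]
      constructor
      · intro hadj
        exact absurd hadj.symm (noadj2 _ (hmemS' v hv) _ (g ⟨u, hu⟩).2)
      · intro hadj
        exact absurd ⟨v, hadj⟩ hu
    · rw [fval_neg u hu, fval_neg v hv]
      constructor
      · intro hadj
        exact absurd hadj (noadj1 _ (g ⟨u, hu⟩).2 _ (g ⟨v, hv⟩).2)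
      · intro hadj
        exact absurd ⟨v, hadj⟩ hu
  -- the injection
  set Bsub := {T : Finset (ℕ × ℕ) // T ∈ T₀.powersetCard i} with hBsub
  have hBcard : Nat.card Bsub = T₀.card.choose i := by
    rw [hBsub, Nat.card_eq_finsetCard, Finset.card_powersetCard]
  set Φ : A × Bsub → C := fun x =>
    ⟨x.1.1 ∪ x.2.1.image ι,
      (hmain x.1 x.2.1 (Finset.mem_powersetCard.1 x.2.2).1
        (Finset.mem_powersetCard.1 x.2.2).2).1,
      (hmain x.1 x.2.1 (Finset.mem_powersetCard.1 x.2.2).1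
        (Finset.mem_powersetCard.1 x.2.2).2).2⟩ with hΦ
  have hΦinj : Function.Injective Φ := by
    rintro ⟨x1, x2⟩ ⟨y1, y2⟩ hxy
    have hval : x1.1 ∪ x2.1.image ι = y1.1 ∪ y2.1.image ι := congrArg Subtype.val hxy
    have recover : ∀ (z1 : A) (z2 : Bsub),
        (z1.1 ∪ z2.1.image ι).filter
          (fun a => (Sum.elim id id a).1 ≤ n / 2) = z1.1 ∧
        (z1.1 ∪ z2.1.image ι).filter
          (fun a => ¬ (Sum.elim id id a).1 ≤ n / 2) = z2.1.image ι := by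
      rintro ⟨S', hS'mem, hS'le, _⟩ ⟨T, hT⟩
      obtain ⟨hTsub, hTcard⟩ := Finset.mem_powersetCard.1 hT
      have hS'q : ∀ a ∈ S', (Sum.elim id id a).1 ≤ n / 2 := by
        intro a ha
        have h1 := (hS'le a ha).2
        have h2 := farc a (hS'mem a ha)
        omega
      have hT'q : ∀ a ∈ T.image ι, ¬ (Sum.elim id id a).1 ≤ n / 2 := by
        intro a ha
        obtain ⟨p, hp, rfl⟩ := Finset.mem_image.1 ha
        rw [hιelim p]
        have := hTout p (hTsub hp)
        omega
      constructor
      · ext a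
        simp only [Finset.mem_filter, Finset.mem_union]
        constructor
        · rintro ⟨ha | ha, hq⟩
          · exact ha
          · exact absurd hq (hT'q a ha)
        · intro ha
          exact ⟨Or.inl ha, hS'q a ha⟩
      · ext a
        simp only [Finset.mem_filter, Finset.mem_union]
        constructor
        · rintro ⟨ha | ha, hq⟩
          · exact absurd (hS'q a ha) hq
          · exact ha
        · intro ha
          exact ⟨Or.inr ha, hT'q a ha⟩
    obtain ⟨r1, r2⟩ := recover x1 x2
    obtain ⟨s1, s2⟩ := recover y1 y2
    have h1 : x1.1 = y1.1 := by rw [← r1, ← s1, hval]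
    have h2 : x2.1.image ι = y2.1.image ι := by rw [← r2, ← s2, hval]
    have h2' : x2.1 = y2.1 := Finset.image_injective hι h2
    exact Prod.ext (Subtype.ext h1) (Subtype.ext h2')
  calc Nat.card A * T₀.card.choose i = Nat.card A * Nat.card Bsub := by rw [hBcard]
    _ = Nat.card (A × Bsub) := (Nat.card_prod A Bsub).symm
    _ ≤ Nat.card C := Nat.card_le_card_of_injective Φ hΦinj

/-- let `H` be a Catalan-pair graph with `i` isolated vertices and let
`H''` be `H` with its isolated vertices removed.  In any two-sided non-crossing arc
diagram on `2n` points, if `N'` is the number of vertex sets inducing a copy of `H''`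
all of whose arcs have both endpoints in `[1, ⌊n/2⌋]`, then the number `N` of vertex
sets inducing a copy of `H` satisfies `N ≥ N'·C(⌈n/4⌉, i)`. -/
theorem induced_copies_lower_bound {V : Type} [Fintype V] (H : SimpleGraph V)
    (hH : ∃ (n' : ℕ) (R' B' : Finset (ℕ × ℕ)), IsTwoSidedDiagram n' R' B' ∧
      Nonempty (H ≃g (CPGraph R' B').induce
        {a : (ℕ × ℕ) ⊕ (ℕ × ℕ) | Sum.elim (· ∈ R') (· ∈ B') a}))
    (n : ℕ) (R B : Finset (ℕ × ℕ)) (hdiag : IsTwoSidedDiagram n R B) :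
    Nat.card {S : Finset ((ℕ × ℕ) ⊕ (ℕ × ℕ)) //
        (∀ a ∈ S, Sum.elim (· ∈ R) (· ∈ B) a) ∧
        (∀ a ∈ S, 1 ≤ (Sum.elim id id a).1 ∧ (Sum.elim id id a).2 ≤ n / 2) ∧
        Nonempty ((H.induce {v : V | ∃ w, H.Adj v w}) ≃g
          (CPGraph R B).induce (↑S : Set ((ℕ × ℕ) ⊕ (ℕ × ℕ))))} *
      Nat.choose ((n + 3) / 4) (Nat.card {v : V // ∀ w, ¬H.Adj v w}) ≤
    Nat.card {S : Finset ((ℕ × ℕ) ⊕ (ℕ × ℕ)) //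
        (∀ a ∈ S, Sum.elim (· ∈ R) (· ∈ B) a) ∧
        Nonempty (H ≃g (CPGraph R B).induce (↑S : Set ((ℕ × ℕ) ⊕ (ℕ × ℕ))))} := by
  classical
  have hout := outside_card hdiag
  have harith : (n + 3) / 4 ≤ (R.filter fun p => n / 2 < p.1).card ∨
      (n + 3) / 4 ≤ (B.filter fun p => n / 2 < p.1).card := by omega
  rcases harith with hcase | hcase
  · refine le_trans (Nat.mul_le_mul_left _ (Nat.choose_le_choose _ hcase)) ?_
    apply key H hdiag Sum.inl Sum.inl_injective (fun p => rfl)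
    · intro p hp
      exact (Finset.mem_filter.1 hp).1
    · intro p hp
      exact (Finset.mem_filter.1 hp).2
    · intro p hp q hq
      exact family_not_alternates hdiag.1 (Finset.mem_filter.1 hp).1
        (Finset.mem_filter.1 hq).1
  · refine le_trans (Nat.mul_le_mul_left _ (Nat.choose_le_choose _ hcase)) ?_
    apply key H hdiag Sum.inr Sum.inr_injective (fun p => rfl)
    · intro p hp
      exact (Finset.mem_filter.1 hp).1
    · intro p hp
      exact (Finset.mem_filter.1 hp).2
    · intro p hp q hq
      exact family_not_alternates hdiag.2.1 (Finset.mem_filter.1 hp).1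
        (Finset.mem_filter.1 hq).1
end
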